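/- For each k with 1 ≤ k ≤ m−2, the rational function f_k = (y_{2k-1} y_{2k} + x_3 v_{k+2}) / x_3 is annihilated by every operator X̂ of the coadjoint realization of the Lie algebra d_{2m} (m ≥ 3); i.e., each f_k is an invariant of the coadjoint representation of d_{2m}. Moreover the functions f_1, ..., f_{m-2} are functionally independent (their differentials are linearly independent at a generic point). -/

import Mathlib

/-- Structure constants (listed direction) of the solvable rigid Lie algebra
`d_{2m}` (m ≥ 3); basis indexing: `X_i ↦ i` (i = 0,…,3), `Y_j ↦ 3 + j`
(j = 1,…,2m-4), `V_k ↦ 2m − 1 + k` (k = 1,…,m). -/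
noncomputable def str2m (m i j s : ℕ) : ℂ :=
  (if i = 0 ∧ (j = 1 ∨ j = 2) ∧ s = j + 1 then 1 else 0) +
  (if 4 ≤ i ∧ i ≤ 2 * m - 2 ∧ i % 2 = 0 ∧ j = i + 1 ∧ s = 3 then 1 else 0) +
  (if i = 2 * m ∧ j ≤ 3 ∧ s = j then ((j + 1 : ℕ) : ℂ) else 0) +
  (if i = 2 * m ∧ 4 ≤ j ∧ j ≤ 2 * m - 2 ∧ j % 2 = 0 ∧ s = j then
    ((j / 2 + 3 : ℕ) : ℂ) else 0) +
  (if i = 2 * m ∧ 5 ≤ j ∧ j ≤ 2 * m - 1 ∧ j % 2 = 1 ∧ s = j then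
    -(((j - 3) / 2 : ℕ) : ℂ) else 0) +
  (if i = 2 * m + 1 ∧ 1 ≤ j ∧ j ≤ 3 ∧ s = j then 1 else 0) +
  (if i = 2 * m + 1 ∧ 5 ≤ j ∧ j ≤ 2 * m - 1 ∧ j % 2 = 1 ∧ s = j then 1 else 0) +
  (if 2 * m + 2 ≤ i ∧ i ≤ 3 * m - 1 ∧ j = 2 * (i - (2 * m + 1)) + 2 ∧ s = j then 1 else 0) +
  (if 2 * m + 2 ≤ i ∧ i ≤ 3 * m - 1 ∧ j = 2 * (i - (2 * m + 1)) + 3 ∧ s = j then -1 else 0)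

/-- Antisymmetrized structure constants of `d_{2m}`. -/
noncomputable def C2m (m i j s : ℕ) : ℂ := str2m m i j s - str2m m j i s

/-- Partial derivative `∂F/∂x_j` in coordinates. -/
noncomputable def pd (j : ℕ) (F : (ℕ → ℂ) → ℂ) (p : ℕ → ℂ) : ℂ :=
  deriv (fun t => F (Function.update p j t)) (p j)

/-- The coadjoint operator `X̂_i = −C_{ij}^k x_k ∂_{x_j}` of `d_{2m}`. -/
noncomputable def op2m (m i : ℕ) (F : (ℕ → ℂ) → ℂ) (p : ℕ → ℂ) : ℂ :=
  ∑ j ∈ Finset.range (3 * m),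
    (-(∑ k ∈ Finset.range (3 * m), C2m m i j k * p k)) * pd j F p

/-- The function `f_k = (y_{2k-1} y_{2k} + x_3 v_{k+2})/x_3` in the coordinates
of the dual (`y_{2k-1} ↦ 2k+2`, `y_{2k} ↦ 2k+3`, `v_{k+2} ↦ 2m+k+1`). -/
noncomputable def fk (m k : ℕ) (p : ℕ → ℂ) : ℂ :=
  (p (2 * k + 2) * p (2 * k + 3) + p 3 * p (2 * m + k + 1)) / p 3

/-- For `1 ≤ k ≤ m−2` each `f_k = (y_{2k-1}y_{2k} + x_3 v_{k+2})/x_3` is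
annihilated by every coadjoint operator of `d_{2m}` (m ≥ 3), i.e. is an
invariant of the coadjoint representation; moreover `f_1,…,f_{m-2}` are
functionally independent: their differentials are linearly independent at a
(generic) point with `x_3 ≠ 0`. -/
lemma sum_ite_mul {N t : ℕ} (P : Prop) [Decidable P] (h : P → t < N) (c : ℂ) (p : ℕ → ℂ) :
    ∑ s ∈ Finset.range N, (if P ∧ s = t then c else 0) * p s = if P then c * p t else 0 := by
  by_cases hP : P
  · simp only [hP, true_and, if_true]
    have h1 : ∀ s ∈ Finset.range N, (if s = t then c else 0) * p s
        = if s = t then c * p s else 0 := fun s _ => by split_ifs <;> simp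
    rw [Finset.sum_congr rfl h1, Finset.sum_ite_eq' (Finset.range N) t (fun s => c * p s)]
    simp [h hP]
  · simp [hP]

lemma strSum (m : ℕ) (hm : 3 ≤ m) (i j : ℕ) (p : ℕ → ℂ) :
    ∑ s ∈ Finset.range (3 * m), str2m m i j s * p s =
    (if i = 0 ∧ (j = 1 ∨ j = 2) then (1:ℂ) * p (j + 1) else 0) +
    (if 4 ≤ i ∧ i ≤ 2 * m - 2 ∧ i % 2 = 0 ∧ j = i + 1 then (1:ℂ) * p 3 else 0) +
    (if i = 2 * m ∧ j ≤ 3 then ((j + 1 : ℕ) : ℂ) * p j else 0) +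
    (if i = 2 * m ∧ 4 ≤ j ∧ j ≤ 2 * m - 2 ∧ j % 2 = 0 then ((j / 2 + 3 : ℕ) : ℂ) * p j else 0) +
    (if i = 2 * m ∧ 5 ≤ j ∧ j ≤ 2 * m - 1 ∧ j % 2 = 1 then -(((j - 3) / 2 : ℕ) : ℂ) * p j else 0) +
    (if i = 2 * m + 1 ∧ 1 ≤ j ∧ j ≤ 3 then (1:ℂ) * p j else 0) +
    (if i = 2 * m + 1 ∧ 5 ≤ j ∧ j ≤ 2 * m - 1 ∧ j % 2 = 1 then (1:ℂ) * p j else 0) +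
    (if 2 * m + 2 ≤ i ∧ i ≤ 3 * m - 1 ∧ j = 2 * (i - (2 * m + 1)) + 2 then (1:ℂ) * p j else 0) +
    (if 2 * m + 2 ≤ i ∧ i ≤ 3 * m - 1 ∧ j = 2 * (i - (2 * m + 1)) + 3 then (-1:ℂ) * p j else 0) := by
  unfold str2m
  simp only [← and_assoc, add_mul, Finset.sum_add_distrib]
  rw [sum_ite_mul _ (fun h => by omega), sum_ite_mul _ (fun h => by omega),
    sum_ite_mul _ (fun h => by omega), sum_ite_mul _ (fun h => by omega),
    sum_ite_mul _ (fun h => by omega), sum_ite_mul _ (fun h => by omega),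
    sum_ite_mul _ (fun h => by omega), sum_ite_mul _ (fun h => by omega),
    sum_ite_mul _ (fun h => by omega)]

lemma Csum (m : ℕ) (hm : 3 ≤ m) (i j : ℕ) (p : ℕ → ℂ) :
    ∑ s ∈ Finset.range (3 * m), C2m m i j s * p s =
    (∑ s ∈ Finset.range (3 * m), str2m m i j s * p s) -
    (∑ s ∈ Finset.range (3 * m), str2m m j i s * p s) := by
  unfold C2m
  simp only [sub_mul, Finset.sum_sub_distrib]

lemma coeff3 (m k i : ℕ) (hm : 3 ≤ m) (hk1 : 1 ≤ k) (hk2 : k ≤ m - 2) (p : ℕ → ℂ) :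
    ∑ s ∈ Finset.range (3 * m), C2m m i 3 s * p s =
    (if i = 2 * m then 4 * p 3 else 0) + (if i = 2 * m + 1 then p 3 else 0) := by
  rw [Csum m hm, strSum m hm, strSum m hm]
  simp only [show (i = 0 ∧ ((3:ℕ) = 1 ∨ (3:ℕ) = 2)) ↔ False from iff_false_intro (by omega),
    show (4 ≤ i ∧ i ≤ 2 * m - 2 ∧ i % 2 = 0 ∧ (3:ℕ) = i + 1) ↔ False from iff_false_intro (by omega),
    show (i = 2 * m ∧ (3:ℕ) ≤ 3) ↔ i = 2 * m from by omega,
    show (i = 2 * m ∧ 4 ≤ (3:ℕ) ∧ (3:ℕ) ≤ 2 * m - 2 ∧ (3:ℕ) % 2 = 0) ↔ False from iff_false_intro (by omega),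
    show (i = 2 * m ∧ 5 ≤ (3:ℕ) ∧ (3:ℕ) ≤ 2 * m - 1 ∧ (3:ℕ) % 2 = 1) ↔ False from iff_false_intro (by omega),
    show (i = 2 * m + 1 ∧ 1 ≤ (3:ℕ) ∧ (3:ℕ) ≤ 3) ↔ i = 2 * m + 1 from by omega,
    show (i = 2 * m + 1 ∧ 5 ≤ (3:ℕ) ∧ (3:ℕ) ≤ 2 * m - 1 ∧ (3:ℕ) % 2 = 1) ↔ False from iff_false_intro (by omega),
    show (2 * m + 2 ≤ i ∧ i ≤ 3 * m - 1 ∧ (3:ℕ) = 2 * (i - (2 * m + 1)) + 2) ↔ False from iff_false_intro (by omega),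
    show (2 * m + 2 ≤ i ∧ i ≤ 3 * m - 1 ∧ (3:ℕ) = 2 * (i - (2 * m + 1)) + 3) ↔ False from iff_false_intro (by omega),
    show ((3:ℕ) = 0 ∧ (i = 1 ∨ i = 2)) ↔ False from iff_false_intro (by omega),
    show (4 ≤ (3:ℕ) ∧ (3:ℕ) ≤ 2 * m - 2 ∧ (3:ℕ) % 2 = 0 ∧ i = 3 + 1) ↔ False from iff_false_intro (by omega),
    show ((3:ℕ) = 2 * m ∧ i ≤ 3) ↔ False from iff_false_intro (by omega),
    show ((3:ℕ) = 2 * m ∧ 4 ≤ i ∧ i ≤ 2 * m - 2 ∧ i % 2 = 0) ↔ False from iff_false_intro (by omega),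
    show ((3:ℕ) = 2 * m ∧ 5 ≤ i ∧ i ≤ 2 * m - 1 ∧ i % 2 = 1) ↔ False from iff_false_intro (by omega),
    show ((3:ℕ) = 2 * m + 1 ∧ 1 ≤ i ∧ i ≤ 3) ↔ False from iff_false_intro (by omega),
    show ((3:ℕ) = 2 * m + 1 ∧ 5 ≤ i ∧ i ≤ 2 * m - 1 ∧ i % 2 = 1) ↔ False from iff_false_intro (by omega),
    show (2 * m + 2 ≤ (3:ℕ) ∧ (3:ℕ) ≤ 3 * m - 1 ∧ i = 2 * ((3:ℕ) - (2 * m + 1)) + 2) ↔ False from iff_false_intro (by omega),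
    show (2 * m + 2 ≤ (3:ℕ) ∧ (3:ℕ) ≤ 3 * m - 1 ∧ i = 2 * ((3:ℕ) - (2 * m + 1)) + 3) ↔ False from iff_false_intro (by omega),
    if_false, add_zero, zero_add, sub_zero, one_mul]
  norm_num

lemma coeffY1 (m k i : ℕ) (hm : 3 ≤ m) (hk1 : 1 ≤ k) (hk2 : k ≤ m - 2) (p : ℕ → ℂ) :
    ∑ s ∈ Finset.range (3 * m), C2m m i (2 * k + 2) s * p s =
    (if i = 2 * m then ((k:ℂ) + 4) * p (2 * k + 2) else 0) +
    (if i = 2 * m + k + 1 then p (2 * k + 2) else 0) -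
    (if i = 2 * k + 3 then p 3 else 0) := by
  rw [Csum m hm, strSum m hm, strSum m hm]
  simp only [
    show (i = 0 ∧ (2 * k + 2 = 1 ∨ 2 * k + 2 = 2)) ↔ False from iff_false_intro (by omega),
    show (4 ≤ i ∧ i ≤ 2 * m - 2 ∧ i % 2 = 0 ∧ 2 * k + 2 = i + 1) ↔ False from iff_false_intro (by omega),
    show (i = 2 * m ∧ 2 * k + 2 ≤ 3) ↔ False from iff_false_intro (by omega),
    show (i = 2 * m ∧ 4 ≤ 2 * k + 2 ∧ 2 * k + 2 ≤ 2 * m - 2 ∧ (2 * k + 2) % 2 = 0) ↔ i = 2 * m from by omega,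
    show (i = 2 * m ∧ 5 ≤ 2 * k + 2 ∧ 2 * k + 2 ≤ 2 * m - 1 ∧ (2 * k + 2) % 2 = 1) ↔ False from iff_false_intro (by omega),
    show (i = 2 * m + 1 ∧ 1 ≤ 2 * k + 2 ∧ 2 * k + 2 ≤ 3) ↔ False from iff_false_intro (by omega),
    show (i = 2 * m + 1 ∧ 5 ≤ 2 * k + 2 ∧ 2 * k + 2 ≤ 2 * m - 1 ∧ (2 * k + 2) % 2 = 1) ↔ False from iff_false_intro (by omega),
    show (2 * m + 2 ≤ i ∧ i ≤ 3 * m - 1 ∧ 2 * k + 2 = 2 * (i - (2 * m + 1)) + 2) ↔ i = 2 * m + k + 1 from by omega,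
    show (2 * m + 2 ≤ i ∧ i ≤ 3 * m - 1 ∧ 2 * k + 2 = 2 * (i - (2 * m + 1)) + 3) ↔ False from iff_false_intro (by omega),
    show (2 * k + 2 = 0 ∧ (i = 1 ∨ i = 2)) ↔ False from iff_false_intro (by omega),
    show (4 ≤ 2 * k + 2 ∧ 2 * k + 2 ≤ 2 * m - 2 ∧ (2 * k + 2) % 2 = 0 ∧ i = 2 * k + 2 + 1) ↔ i = 2 * k + 3 from by omega,
    show (2 * k + 2 = 2 * m ∧ i ≤ 3) ↔ False from iff_false_intro (by omega),
    show (2 * k + 2 = 2 * m ∧ 4 ≤ i ∧ i ≤ 2 * m - 2 ∧ i % 2 = 0) ↔ False from iff_false_intro (by omega),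
    show (2 * k + 2 = 2 * m ∧ 5 ≤ i ∧ i ≤ 2 * m - 1 ∧ i % 2 = 1) ↔ False from iff_false_intro (by omega),
    show (2 * k + 2 = 2 * m + 1 ∧ 1 ≤ i ∧ i ≤ 3) ↔ False from iff_false_intro (by omega),
    show (2 * k + 2 = 2 * m + 1 ∧ 5 ≤ i ∧ i ≤ 2 * m - 1 ∧ i % 2 = 1) ↔ False from iff_false_intro (by omega),
    show (2 * m + 2 ≤ 2 * k + 2 ∧ 2 * k + 2 ≤ 3 * m - 1 ∧ i = 2 * (2 * k + 2 - (2 * m + 1)) + 2) ↔ False from iff_false_intro (by omega),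
    show (2 * m + 2 ≤ 2 * k + 2 ∧ 2 * k + 2 ≤ 3 * m - 1 ∧ i = 2 * (2 * k + 2 - (2 * m + 1)) + 3) ↔ False from iff_false_intro (by omega),
    show ((2 * k + 2) / 2 + 3 : ℕ) = k + 4 from by omega,
    if_false, add_zero, zero_add, sub_zero, zero_sub, one_mul]
  split_ifs <;> first | (exfalso; omega) | (subst_vars; push_cast; ring)

lemma coeffY2 (m k i : ℕ) (hm : 3 ≤ m) (hk1 : 1 ≤ k) (hk2 : k ≤ m - 2) (p : ℕ → ℂ) :
    ∑ s ∈ Finset.range (3 * m), C2m m i (2 * k + 3) s * p s =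
    (if i = 2 * k + 2 then p 3 else 0) +
    (if i = 2 * m then -(k:ℂ) * p (2 * k + 3) else 0) +
    (if i = 2 * m + 1 then p (2 * k + 3) else 0) +
    (if i = 2 * m + k + 1 then -p (2 * k + 3) else 0) := by
  rw [Csum m hm, strSum m hm, strSum m hm]
  simp only [
    show (i = 0 ∧ (2 * k + 3 = 1 ∨ 2 * k + 3 = 2)) ↔ False from iff_false_intro (by omega),
    show (4 ≤ i ∧ i ≤ 2 * m - 2 ∧ i % 2 = 0 ∧ 2 * k + 3 = i + 1) ↔ i = 2 * k + 2 from by omega,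
    show (i = 2 * m ∧ 2 * k + 3 ≤ 3) ↔ False from iff_false_intro (by omega),
    show (i = 2 * m ∧ 4 ≤ 2 * k + 3 ∧ 2 * k + 3 ≤ 2 * m - 2 ∧ (2 * k + 3) % 2 = 0) ↔ False from iff_false_intro (by omega),
    show (i = 2 * m ∧ 5 ≤ 2 * k + 3 ∧ 2 * k + 3 ≤ 2 * m - 1 ∧ (2 * k + 3) % 2 = 1) ↔ i = 2 * m from by omega,
    show (i = 2 * m + 1 ∧ 1 ≤ 2 * k + 3 ∧ 2 * k + 3 ≤ 3) ↔ False from iff_false_intro (by omega),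
    show (i = 2 * m + 1 ∧ 5 ≤ 2 * k + 3 ∧ 2 * k + 3 ≤ 2 * m - 1 ∧ (2 * k + 3) % 2 = 1) ↔ i = 2 * m + 1 from by omega,
    show (2 * m + 2 ≤ i ∧ i ≤ 3 * m - 1 ∧ 2 * k + 3 = 2 * (i - (2 * m + 1)) + 2) ↔ False from iff_false_intro (by omega),
    show (2 * m + 2 ≤ i ∧ i ≤ 3 * m - 1 ∧ 2 * k + 3 = 2 * (i - (2 * m + 1)) + 3) ↔ i = 2 * m + k + 1 from by omega,
    show (2 * k + 3 = 0 ∧ (i = 1 ∨ i = 2)) ↔ False from iff_false_intro (by omega),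
    show (4 ≤ 2 * k + 3 ∧ 2 * k + 3 ≤ 2 * m - 2 ∧ (2 * k + 3) % 2 = 0 ∧ i = 2 * k + 3 + 1) ↔ False from iff_false_intro (by omega),
    show (2 * k + 3 = 2 * m ∧ i ≤ 3) ↔ False from iff_false_intro (by omega),
    show (2 * k + 3 = 2 * m ∧ 4 ≤ i ∧ i ≤ 2 * m - 2 ∧ i % 2 = 0) ↔ False from iff_false_intro (by omega),
    show (2 * k + 3 = 2 * m ∧ 5 ≤ i ∧ i ≤ 2 * m - 1 ∧ i % 2 = 1) ↔ False from iff_false_intro (by omega),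
    show (2 * k + 3 = 2 * m + 1 ∧ 1 ≤ i ∧ i ≤ 3) ↔ False from iff_false_intro (by omega),
    show (2 * k + 3 = 2 * m + 1 ∧ 5 ≤ i ∧ i ≤ 2 * m - 1 ∧ i % 2 = 1) ↔ False from iff_false_intro (by omega),
    show (2 * m + 2 ≤ 2 * k + 3 ∧ 2 * k + 3 ≤ 3 * m - 1 ∧ i = 2 * (2 * k + 3 - (2 * m + 1)) + 2) ↔ False from iff_false_intro (by omega),
    show (2 * m + 2 ≤ 2 * k + 3 ∧ 2 * k + 3 ≤ 3 * m - 1 ∧ i = 2 * (2 * k + 3 - (2 * m + 1)) + 3) ↔ False from iff_false_intro (by omega),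
    show ((2 * k + 3 - 3) / 2 : ℕ) = k from by omega,
    if_false, add_zero, zero_add, sub_zero, zero_sub, one_mul]
  split_ifs <;> first | (exfalso; omega) | (subst_vars; push_cast; ring)

lemma coeffV (m k i : ℕ) (hm : 3 ≤ m) (hk1 : 1 ≤ k) (hk2 : k ≤ m - 2) (p : ℕ → ℂ) :
    ∑ s ∈ Finset.range (3 * m), C2m m i (2 * m + k + 1) s * p s =
    -(if i = 2 * k + 2 then p (2 * k + 2) else 0) +
    (if i = 2 * k + 3 then p (2 * k + 3) else 0) := by
  rw [Csum m hm, strSum m hm, strSum m hm]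
  simp only [
    show (i = 0 ∧ (2 * m + k + 1 = 1 ∨ 2 * m + k + 1 = 2)) ↔ False from iff_false_intro (by omega),
    show (4 ≤ i ∧ i ≤ 2 * m - 2 ∧ i % 2 = 0 ∧ 2 * m + k + 1 = i + 1) ↔ False from iff_false_intro (by omega),
    show (i = 2 * m ∧ 2 * m + k + 1 ≤ 3) ↔ False from iff_false_intro (by omega),
    show (i = 2 * m ∧ 4 ≤ 2 * m + k + 1 ∧ 2 * m + k + 1 ≤ 2 * m - 2 ∧ (2 * m + k + 1) % 2 = 0) ↔ False from iff_false_intro (by omega),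
    show (i = 2 * m ∧ 5 ≤ 2 * m + k + 1 ∧ 2 * m + k + 1 ≤ 2 * m - 1 ∧ (2 * m + k + 1) % 2 = 1) ↔ False from iff_false_intro (by omega),
    show (i = 2 * m + 1 ∧ 1 ≤ 2 * m + k + 1 ∧ 2 * m + k + 1 ≤ 3) ↔ False from iff_false_intro (by omega),
    show (i = 2 * m + 1 ∧ 5 ≤ 2 * m + k + 1 ∧ 2 * m + k + 1 ≤ 2 * m - 1 ∧ (2 * m + k + 1) % 2 = 1) ↔ False from iff_false_intro (by omega),
    show (2 * m + 2 ≤ i ∧ i ≤ 3 * m - 1 ∧ 2 * m + k + 1 = 2 * (i - (2 * m + 1)) + 2) ↔ False from iff_false_intro (by omega),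
    show (2 * m + 2 ≤ i ∧ i ≤ 3 * m - 1 ∧ 2 * m + k + 1 = 2 * (i - (2 * m + 1)) + 3) ↔ False from iff_false_intro (by omega),
    show (2 * m + k + 1 = 0 ∧ (i = 1 ∨ i = 2)) ↔ False from iff_false_intro (by omega),
    show (4 ≤ 2 * m + k + 1 ∧ 2 * m + k + 1 ≤ 2 * m - 2 ∧ (2 * m + k + 1) % 2 = 0 ∧ i = 2 * m + k + 1 + 1) ↔ False from iff_false_intro (by omega),
    show (2 * m + k + 1 = 2 * m ∧ i ≤ 3) ↔ False from iff_false_intro (by omega),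
    show (2 * m + k + 1 = 2 * m ∧ 4 ≤ i ∧ i ≤ 2 * m - 2 ∧ i % 2 = 0) ↔ False from iff_false_intro (by omega),
    show (2 * m + k + 1 = 2 * m ∧ 5 ≤ i ∧ i ≤ 2 * m - 1 ∧ i % 2 = 1) ↔ False from iff_false_intro (by omega),
    show (2 * m + k + 1 = 2 * m + 1 ∧ 1 ≤ i ∧ i ≤ 3) ↔ False from iff_false_intro (by omega),
    show (2 * m + k + 1 = 2 * m + 1 ∧ 5 ≤ i ∧ i ≤ 2 * m - 1 ∧ i % 2 = 1) ↔ False from iff_false_intro (by omega),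
    show (2 * m + 2 ≤ 2 * m + k + 1 ∧ 2 * m + k + 1 ≤ 3 * m - 1 ∧ i = 2 * (2 * m + k + 1 - (2 * m + 1)) + 2) ↔ i = 2 * k + 2 from by omega,
    show (2 * m + 2 ≤ 2 * m + k + 1 ∧ 2 * m + k + 1 ≤ 3 * m - 1 ∧ i = 2 * (2 * m + k + 1 - (2 * m + 1)) + 3) ↔ i = 2 * k + 3 from by omega,
    if_false, add_zero, zero_add, sub_zero, zero_sub, one_mul]
  split_ifs <;> first | (exfalso; omega) | (subst_vars; push_cast; ring)

lemma pd_fk_x3 (m k : ℕ) (hm : 3 ≤ m) (hk1 : 1 ≤ k) (hk2 : k ≤ m - 2) (p : ℕ → ℂ)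
    (hp : p 3 ≠ 0) :
    pd 3 (fk m k) p = -(p (2 * k + 2) * p (2 * k + 3)) / (p 3) ^ 2 := by
  unfold pd fk
  have e : (fun t => (Function.update p 3 t (2 * k + 2) * Function.update p 3 t (2 * k + 3) +
      Function.update p 3 t 3 * Function.update p 3 t (2 * m + k + 1)) /
      Function.update p 3 t 3) =
      fun t => (p (2 * k + 2) * p (2 * k + 3) + t * p (2 * m + k + 1)) / t := by
    funext t
    rw [Function.update_self, Function.update_of_ne (by omega), Function.update_of_ne (by omega),
      Function.update_of_ne (by omega)]
  rw [e]
  have h1 : HasDerivAt (fun t : ℂ => p (2 * k + 2) * p (2 * k + 3) + t * p (2 * m + k + 1))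
      (p (2 * m + k + 1)) (p 3) := by
    simpa using ((hasDerivAt_id (p 3)).mul_const (p (2 * m + k + 1))).const_add
      (p (2 * k + 2) * p (2 * k + 3))
  have h2 : HasDerivAt (fun t : ℂ => t) 1 (p 3) := hasDerivAt_id (p 3)
  have h3 : HasDerivAt (fun t : ℂ => (p (2 * k + 2) * p (2 * k + 3) + t * p (2 * m + k + 1)) / t)
      _ (p 3) := h1.div h2 hp
  rw [h3.deriv]
  field_simp
  ring

lemma pd_fk_y1 (m k : ℕ) (hm : 3 ≤ m) (hk1 : 1 ≤ k) (hk2 : k ≤ m - 2) (p : ℕ → ℂ) :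
    pd (2 * k + 2) (fk m k) p = p (2 * k + 3) / p 3 := by
  unfold pd fk
  have e : (fun t => (Function.update p (2 * k + 2) t (2 * k + 2) *
      Function.update p (2 * k + 2) t (2 * k + 3) +
      Function.update p (2 * k + 2) t 3 * Function.update p (2 * k + 2) t (2 * m + k + 1)) /
      Function.update p (2 * k + 2) t 3) =
      fun t => (t * p (2 * k + 3) + p 3 * p (2 * m + k + 1)) / p 3 := by
    funext t
    rw [Function.update_self, Function.update_of_ne (by omega), Function.update_of_ne (by omega),
      Function.update_of_ne (by omega)]
  rw [e]
  have h1 : HasDerivAt (fun t : ℂ => (t * p (2 * k + 3) + p 3 * p (2 * m + k + 1)) / p 3)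
      (1 * p (2 * k + 3) / p 3) (p (2 * k + 2)) :=
    (((hasDerivAt_id _).mul_const _).add_const _).div_const _
  rw [h1.deriv, one_mul]

lemma pd_fk_y2 (m k : ℕ) (hm : 3 ≤ m) (hk1 : 1 ≤ k) (hk2 : k ≤ m - 2) (p : ℕ → ℂ) :
    pd (2 * k + 3) (fk m k) p = p (2 * k + 2) / p 3 := by
  unfold pd fk
  have e : (fun t => (Function.update p (2 * k + 3) t (2 * k + 2) *
      Function.update p (2 * k + 3) t (2 * k + 3) +
      Function.update p (2 * k + 3) t 3 * Function.update p (2 * k + 3) t (2 * m + k + 1)) /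
      Function.update p (2 * k + 3) t 3) =
      fun t => (p (2 * k + 2) * t + p 3 * p (2 * m + k + 1)) / p 3 := by
    funext t
    rw [Function.update_self, Function.update_of_ne (by omega), Function.update_of_ne (by omega),
      Function.update_of_ne (by omega)]
  rw [e]
  have h1 : HasDerivAt (fun t : ℂ => (p (2 * k + 2) * t + p 3 * p (2 * m + k + 1)) / p 3)
      (p (2 * k + 2) * 1 / p 3) (p (2 * k + 3)) :=
    ((((hasDerivAt_id _).const_mul _)).add_const _).div_const _
  rw [h1.deriv, mul_one]

lemma pd_fk_v (m k : ℕ) (hm : 3 ≤ m) (hk1 : 1 ≤ k) (hk2 : k ≤ m - 2) (p : ℕ → ℂ)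
    (hp : p 3 ≠ 0) :
    pd (2 * m + k + 1) (fk m k) p = 1 := by
  unfold pd fk
  have e : (fun t => (Function.update p (2 * m + k + 1) t (2 * k + 2) *
      Function.update p (2 * m + k + 1) t (2 * k + 3) +
      Function.update p (2 * m + k + 1) t 3 * Function.update p (2 * m + k + 1) t (2 * m + k + 1)) /
      Function.update p (2 * m + k + 1) t 3) =
      fun t => (p (2 * k + 2) * p (2 * k + 3) + p 3 * t) / p 3 := by
    funext t
    rw [Function.update_self, Function.update_of_ne (by omega), Function.update_of_ne (by omega),
      Function.update_of_ne (by omega)]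
  rw [e]
  have h1 : HasDerivAt (fun t : ℂ => (p (2 * k + 2) * p (2 * k + 3) + p 3 * t) / p 3)
      (p 3 * 1 / p 3) (p (2 * m + k + 1)) :=
    (((hasDerivAt_id _).const_mul _).const_add _).div_const _
  rw [h1.deriv, mul_one, div_self hp]

lemma pd_fk_zero (m k j : ℕ) (hj : j ≠ 3 ∧ j ≠ 2 * k + 2 ∧ j ≠ 2 * k + 3 ∧ j ≠ 2 * m + k + 1)
    (p : ℕ → ℂ) : pd j (fk m k) p = 0 := by
  unfold pd fk
  have e : (fun t => (Function.update p j t (2 * k + 2) * Function.update p j t (2 * k + 3) +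
      Function.update p j t 3 * Function.update p j t (2 * m + k + 1)) /
      Function.update p j t 3) =
      fun _ : ℂ => (p (2 * k + 2) * p (2 * k + 3) + p 3 * p (2 * m + k + 1)) / p 3 := by
    funext t
    rw [Function.update_of_ne (by omega), Function.update_of_ne (by omega),
      Function.update_of_ne (by omega), Function.update_of_ne (by omega)]
  rw [e, deriv_const]

theorem fk_invariants_d2m (m : ℕ) (hm : 3 ≤ m) :
    (∀ k, 1 ≤ k → k ≤ m - 2 → ∀ p : ℕ → ℂ, p 3 ≠ 0 →
      ∀ i < 3 * m, op2m m i (fk m k) p = 0) ∧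
    (∃ p : ℕ → ℂ, p 3 ≠ 0 ∧
      LinearIndependent ℂ
        (fun k : Fin (m - 2) => fun j : Fin (3 * m) => pd j.1 (fk m (k.1 + 1)) p)) := by
  constructor
  · intro k hk1 hk2 p hp i hi
    unfold op2m
    have hsub : (insert 3 (insert (2 * k + 2) (insert (2 * k + 3)
        ({2 * m + k + 1} : Finset ℕ)))) ⊆ Finset.range (3 * m) := by
      intro x hx
      simp only [Finset.mem_insert, Finset.mem_singleton] at hx
      simp only [Finset.mem_range]
      omega
    rw [← Finset.sum_subset hsub (fun j hj hj2 => by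
      rw [pd_fk_zero m k j (by simp only [Finset.mem_insert, Finset.mem_singleton] at hj2; omega) p,
        mul_zero])]
    rw [Finset.sum_insert (by simp only [Finset.mem_insert, Finset.mem_singleton]; omega),
      Finset.sum_insert (by simp only [Finset.mem_insert, Finset.mem_singleton]; omega),
      Finset.sum_insert (by simp only [Finset.mem_singleton]; omega),
      Finset.sum_singleton]
    rw [coeff3 m k i hm hk1 hk2 p, coeffY1 m k i hm hk1 hk2 p, coeffY2 m k i hm hk1 hk2 p,
      coeffV m k i hm hk1 hk2 p, pd_fk_x3 m k hm hk1 hk2 p hp, pd_fk_y1 m k hm hk1 hk2 p,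
      pd_fk_y2 m k hm hk1 hk2 p, pd_fk_v m k hm hk1 hk2 p hp]
    split_ifs <;> first | (exfalso; omega) | (field_simp; ring) | field_simp
  · set p0 : ℕ → ℂ := fun j => if j = 3 then 1 else 0 with hp0def
    have hp03 : p0 3 = 1 := by simp [hp0def]
    have hp0 : p0 3 ≠ 0 := by rw [hp03]; exact one_ne_zero
    refine ⟨p0, hp0, ?_⟩
    have hfam : (fun k : Fin (m - 2) => fun j : Fin (3 * m) => pd j.1 (fk m (k.1 + 1)) p0) =
        fun k : Fin (m - 2) =>
          (Pi.single (⟨2 * m + k.1 + 2, by omega⟩ : Fin (3 * m)) (1 : ℂ)) := by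
      funext k j
      have hklt : k.1 < m - 2 := k.2
      have hk1' : 1 ≤ k.1 + 1 := by omega
      have hk2' : k.1 + 1 ≤ m - 2 := by omega
      rw [Pi.single_apply]
      by_cases hj : j = (⟨2 * m + k.1 + 2, by omega⟩ : Fin (3 * m))
      · rw [if_pos hj, hj]
        show pd (2 * m + k.1 + 2) (fk m (k.1 + 1)) p0 = 1
        rw [show 2 * m + k.1 + 2 = 2 * m + (k.1 + 1) + 1 by ring]
        exact pd_fk_v m (k.1 + 1) hm hk1' hk2' p0 hp0
      · rw [if_neg hj]
        have hjv : j.1 ≠ 2 * m + k.1 + 2 := fun h => hj (Fin.ext h)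
        by_cases h3 : j.1 = 3
        · rw [h3, pd_fk_x3 m (k.1 + 1) hm hk1' hk2' p0 hp0]
          have : p0 (2 * (k.1 + 1) + 2) = 0 := by
            simp only [hp0def]; rw [if_neg (by omega)]
          rw [this]
          simp
        · by_cases hy1 : j.1 = 2 * (k.1 + 1) + 2
          · rw [hy1, pd_fk_y1 m (k.1 + 1) hm hk1' hk2' p0]
            have : p0 (2 * (k.1 + 1) + 3) = 0 := by
              simp only [hp0def]; rw [if_neg (by omega)]
            rw [this, zero_div]
          · by_cases hy2 : j.1 = 2 * (k.1 + 1) + 3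
            · rw [hy2, pd_fk_y2 m (k.1 + 1) hm hk1' hk2' p0]
              have : p0 (2 * (k.1 + 1) + 2) = 0 := by
                simp only [hp0def]; rw [if_neg (by omega)]
              rw [this, zero_div]
            · exact pd_fk_zero m (k.1 + 1) j.1 (by omega) p0
    rw [hfam]
    have hg : Function.Injective
        (fun k : Fin (m - 2) => (⟨2 * m + k.1 + 2, by omega⟩ : Fin (3 * m))) := by
      intro a b hab
      have : (2 * m + a.1 + 2 : ℕ) = 2 * m + b.1 + 2 := congrArg Fin.val hab
      exact Fin.ext (by omega)
    have h2 := ((Pi.basisFun ℂ (Fin (3 * m))).linearIndependent).comp _ hg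
    rw [show (fun k : Fin (m - 2) =>
        (Pi.single (⟨2 * m + k.1 + 2, by omega⟩ : Fin (3 * m)) (1 : ℂ))) =
        (⇑(Pi.basisFun ℂ (Fin (3 * m))) ∘ fun k : Fin (m - 2) =>
          (⟨2 * m + k.1 + 2, by omega⟩ : Fin (3 * m))) from
      funext fun k => by simp [Function.comp, Pi.basisFun_apply]]
    exact h2
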